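/- In the case k = 1, the limiting density of 2-gaps is D(1, 2) = 6·lim_{n→∞} t_n^{(2)} = 3e^{−2}, and consequently the limiting filling density for k = 1 is D(1) = D(1, 1) + (2/3)·D(1, 2) = 1 − e^{−2}. -/

import Mathlib

open Finset Filter Topology

/-- The key auxiliary sequence: `T n = ∑_{m=0}^{n} (-2)^m (m+1)/(m+3)!`. -/
noncomputable def parkT (n : ℕ) : ℝ :=
  ∑ m ∈ Finset.range (n + 1), (-2 : ℝ) ^ m * (m + 1) / (m + 3).factorial

lemma parkT_succ (n : ℕ) :
    parkT (n + 1) = parkT n + (-2 : ℝ) ^ (n + 1) * ((n : ℝ) + 2) / (n + 4).factorial := by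
  unfold parkT
  rw [Finset.sum_range_succ, show n + 1 + 3 = n + 4 from rfl]
  push_cast
  ring

lemma parkT_one : parkT 1 = 0 := by
  norm_num [parkT, Finset.sum_range_succ, Nat.factorial]

lemma parkT_two : parkT 2 = 1 / 10 := by
  norm_num [parkT, Finset.sum_range_succ, Nat.factorial]

lemma parkT_rec (m : ℕ) :
    ((m : ℝ) + 3) * ((m : ℝ) + 6) * parkT (m + 3)
      = ((m : ℝ) + 2) * ((m : ℝ) + 5) * parkT (m + 2)
        + 2 * ((m : ℝ) + 4) * parkT (m + 1) := by
  have h1 := parkT_succ (m + 2)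
  have h2 := parkT_succ (m + 1)
  rw [show m + 2 + 1 = m + 3 from rfl, show m + 2 + 4 = m + 6 from rfl] at h1
  rw [show m + 1 + 1 = m + 2 from rfl, show m + 1 + 4 = m + 5 from rfl] at h2
  have hf : ((m + 6).factorial : ℝ) = ((m : ℝ) + 6) * (m + 5).factorial := by
    rw [show m + 6 = (m + 5) + 1 from rfl, Nat.factorial_succ]
    push_cast; ring
  have hne : ((m + 5).factorial : ℝ) ≠ 0 := by positivity
  rw [h1, h2, hf]
  push_cast
  have hp2 : (-2 : ℝ) ^ (m + 2 + 1) = -2 * (-2 : ℝ) ^ (m + 1 + 1) := by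
    rw [show m + 2 + 1 = (m + 1 + 1) + 1 from rfl, pow_succ]; ring
  rw [hp2]
  field_simp
  ring

lemma parkT_tendsto : Tendsto parkT atTop (𝓝 (Real.exp (-2) / 2)) := by
  have hg : HasSum (fun j : ℕ => (-2 : ℝ) ^ j / j.factorial) (Real.exp (-2)) := by
    rw [Real.exp_eq_exp_ℝ]
    exact NormedSpace.expSeries_div_hasSum_exp (-2 : ℝ)
  have h2 : HasSum (fun m : ℕ => (-2 : ℝ) ^ (m + 2) / (m + 2).factorial)
      (Real.exp (-2) - ∑ i ∈ Finset.range 2, (-2 : ℝ) ^ i / i.factorial) :=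
    (hasSum_nat_add_iff' 2).mpr hg
  have h3 : HasSum (fun m : ℕ => (-2 : ℝ) ^ (m + 3) / (m + 3).factorial)
      (Real.exp (-2) - ∑ i ∈ Finset.range 3, (-2 : ℝ) ^ i / i.factorial) :=
    (hasSum_nat_add_iff' 3).mpr hg
  have hsum := (h2.mul_left (1/4)).add (h3.mul_left (1/4))
  have heq : (fun m : ℕ =>
      1/4 * ((-2 : ℝ) ^ (m + 2) / (m + 2).factorial)
        + 1/4 * ((-2 : ℝ) ^ (m + 3) / (m + 3).factorial))
      = (fun m : ℕ => (-2 : ℝ) ^ m * ((m : ℝ) + 1) / (m + 3).factorial) := by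
    funext m
    have hf3 : ((m + 3).factorial : ℝ) = ((m : ℝ) + 3) * (m + 2).factorial := by
      rw [show m + 3 = (m + 2) + 1 from rfl, Nat.factorial_succ]; push_cast; ring
    have hne2 : ((m + 2).factorial : ℝ) ≠ 0 := by positivity
    rw [hf3, pow_add, pow_add]
    field_simp
    ring
  rw [heq] at hsum
  have hval : 1/4 * (Real.exp (-2) - ∑ i ∈ Finset.range 2, (-2 : ℝ) ^ i / i.factorial)
      + 1/4 * (Real.exp (-2) - ∑ i ∈ Finset.range 3, (-2 : ℝ) ^ i / i.factorial)
      = Real.exp (-2) / 2 := by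
    norm_num [Finset.sum_range_succ, Nat.factorial]
    ring
  rw [hval] at hsum
  have htend := hsum.tendsto_sum_nat
  have : parkT = (fun n : ℕ => ∑ m ∈ Finset.range n,
      (-2 : ℝ) ^ m * ((m : ℝ) + 1) / (m + 3).factorial) ∘ (fun n => n + 1) := by
    funext n; simp [parkT]
  rw [this]
  exact htend.comp (tendsto_add_atTop_nat 1)

theorem parking_k1_filling_density
    (a : ℕ → ℕ → ℝ) (L : ℕ → ℝ)
    (ha_init : ∀ r : ℕ, 1 ≤ r → r ≤ 2 → ∀ n : ℕ, 1 ≤ n → n ≤ 2 →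
      a r n = if n = r then 1 else 0)
    (ha_rec : ∀ r : ℕ, 1 ≤ r → r ≤ 2 → ∀ n : ℕ, 3 ≤ n →
      a r n = 2 / ((n : ℝ) - 2) * ∑ i ∈ Finset.Icc 1 (n - 2), a r i)
    (hL : ∀ r : ℕ, 1 ≤ r → r ≤ 2 →
      Filter.Tendsto
        (fun n : ℕ => (∑ i ∈ Finset.Icc 1 n, a r i) / ((n : ℝ) * ((n : ℝ) + 3)))
        Filter.atTop (𝓝 (L r))) :
    6 * L 2 = 3 * Real.exp (-2) ∧
    4 * L 1 + 2 / 3 * (6 * L 2) = 1 - Real.exp (-2) := by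
  -- closed forms for partial sums
  have key : ∀ n : ℕ, 1 ≤ n →
      (∑ i ∈ Finset.Icc 1 n, a 2 i) = (n : ℝ) * ((n : ℝ) + 3) * parkT n ∧
      (∑ i ∈ Finset.Icc 1 n, a 1 i)
        = (n : ℝ) * ((n : ℝ) + 3) * (1/4 - 3/2 * parkT n) := by
    intro n
    induction n using Nat.strong_induction_on with
    | _ n ih =>
      intro hn
      match n, hn with
      | 1, _ =>
        rw [Finset.Icc_self, Finset.sum_singleton, Finset.sum_singleton]
        rw [ha_init 2 (by norm_num) (by norm_num) 1 (by norm_num) (by norm_num),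
            ha_init 1 (by norm_num) (by norm_num) 1 (by norm_num) (by norm_num)]
        norm_num [parkT_one]
      | 2, _ =>
        have h12 : Finset.Icc 1 2 = {1, 2} := rfl
        rw [h12, Finset.sum_insert (by norm_num), Finset.sum_singleton,
            Finset.sum_insert (by norm_num), Finset.sum_singleton]
        rw [ha_init 2 (by norm_num) (by norm_num) 1 (by norm_num) (by norm_num),
            ha_init 2 (by norm_num) (by norm_num) 2 (by norm_num) (by norm_num),
            ha_init 1 (by norm_num) (by norm_num) 1 (by norm_num) (by norm_num),
            ha_init 1 (by norm_num) (by norm_num) 2 (by norm_num) (by norm_num)]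
        norm_num [parkT_two]
      | (m + 3), _ =>
        have ih2 := ih (m + 2) (by omega) (by omega)
        have ih1 := ih (m + 1) (by omega) (by omega)
        have hsplit : ∀ r : ℕ, (∑ i ∈ Finset.Icc 1 (m + 3), a r i)
            = (∑ i ∈ Finset.Icc 1 (m + 2), a r i) + a r (m + 3) := by
          intro r
          rw [← Finset.sum_Icc_succ_top (by omega : 1 ≤ m + 3)]
        have hrec : ∀ r : ℕ, 1 ≤ r → r ≤ 2 →
            a r (m + 3) = 2 / ((m : ℝ) + 1) * ∑ i ∈ Finset.Icc 1 (m + 1), a r i := by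
          intro r hr1 hr2
          have := ha_rec r hr1 hr2 (m + 3) (by omega)
          rw [show m + 3 - 2 = m + 1 from rfl] at this
          rw [this]
          norm_num
          left
          ring
        have hm1 : ((m : ℝ) + 1) ≠ 0 := by positivity
        have hTrec := parkT_rec m
        constructor
        · have ha2 : a 2 (m + 3) = 2 * ((m : ℝ) + 4) * parkT (m + 1) := by
            rw [hrec 2 (by norm_num) (by norm_num), ih1.1]
            push_cast
            field_simp
            ring
          rw [hsplit 2, ha2, ih2.1]
          push_cast
          linear_combination -hTrec
        · have ha1 : a 1 (m + 3)
              = 2 * ((m : ℝ) + 4) * (1/4 - 3/2 * parkT (m + 1)) := by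
            rw [hrec 1 (by norm_num) (by norm_num), ih1.2]
            push_cast
            field_simp
            ring
          rw [hsplit 1, ha1, ih2.2]
          push_cast
          linear_combination (3/2) * hTrec
  -- identify the limits
  have hL2 : L 2 = Real.exp (-2) / 2 := by
    have htend : Tendsto
        (fun n : ℕ => (∑ i ∈ Finset.Icc 1 n, a 2 i) / ((n : ℝ) * ((n : ℝ) + 3)))
        atTop (𝓝 (Real.exp (-2) / 2)) := by
      apply parkT_tendsto.congr'
      filter_upwards [eventually_ge_atTop 1] with n hn
      have hne : (n : ℝ) * ((n : ℝ) + 3) ≠ 0 := by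
        have : (1 : ℝ) ≤ (n : ℝ) := by exact_mod_cast hn
        positivity
      rw [(key n hn).1]
      field_simp
    exact tendsto_nhds_unique (hL 2 (by norm_num) (by norm_num)) htend
  have hL1 : L 1 = 1/4 - 3/2 * (Real.exp (-2) / 2) := by
    have htend : Tendsto
        (fun n : ℕ => (∑ i ∈ Finset.Icc 1 n, a 1 i) / ((n : ℝ) * ((n : ℝ) + 3)))
        atTop (𝓝 (1/4 - 3/2 * (Real.exp (-2) / 2))) := by
      have hbase : Tendsto (fun n : ℕ => 1/4 - 3/2 * parkT n) atTop
          (𝓝 (1/4 - 3/2 * (Real.exp (-2) / 2))) :=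
        (tendsto_const_nhds.sub (parkT_tendsto.const_mul (3/2)))
      apply hbase.congr'
      filter_upwards [eventually_ge_atTop 1] with n hn
      have hne : (n : ℝ) * ((n : ℝ) + 3) ≠ 0 := by
        have : (1 : ℝ) ≤ (n : ℝ) := by exact_mod_cast hn
        positivity
      rw [(key n hn).2]
      field_simp
    exact tendsto_nhds_unique (hL 1 (by norm_num) (by norm_num)) htend
  rw [hL1, hL2]
  constructor <;> ring
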